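/- arXiv:1106.1304 — 4 statements merged into one kernel-verified Lean document; each statement's English description precedes it below -/
import Mathlib

section
/- For any two coprime positive integers a and b, the double sum S(a,b) = Σ_{j=0}^{a-1} Σ_{k=0}^{b-1} |k/b - j/a| equals (2a²b² - 3ab + a² + b² - 1)/(6ab). -/
open Finset

private lemma Sab_sum_id (n : ℕ) : ∑ j ∈ range n, (j : ℝ) = n * (n - 1) / 2 := by
  induction n with
  | zero => simp
  | succ n ih => rw [sum_range_succ, ih]; push_cast; ring

private lemma Sab_sum_sq (n : ℕ) :
    ∑ j ∈ range n, (j : ℝ)^2 = n * (n - 1) * (2 * n - 1) / 6 := by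
  induction n with
  | zero => simp
  | succ n ih => rw [sum_range_succ, ih]; push_cast; ring

private lemma Sab_inner (a b j m r : ℕ) (ha : 0 < a) (h1 : a * m = j * b + r)
    (hr : r < a) (hm : m ≤ b) :
    ∑ k ∈ range b, |(k : ℝ) * a - j * b| =
      (a:ℝ) * b * (b - 1) / 2 - j * b^2 + ((j:ℝ)^2 * b^2 - (r:ℝ)^2) / a + j * b + r := by
  have hasR : (0:ℝ) < a := by exact_mod_cast ha
  have h1R : (a:ℝ) * m = j * b + r := by exact_mod_cast h1
  have hrR : (r:ℝ) < a := by exact_mod_cast hr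
  have hr0 : (0:ℝ) ≤ r := by positivity
  have hsplit : ∑ k ∈ range b, |(k : ℝ) * a - j * b| =
      (∑ k ∈ range m, |(k : ℝ) * a - j * b|) + ∑ k ∈ Ico m b, |(k : ℝ) * a - j * b| := by
    rw [range_eq_Ico, ← Finset.sum_Ico_consecutive _ (Nat.zero_le m) hm, ← range_eq_Ico]
  have e1 : ∀ k ∈ range m, |(k : ℝ) * a - j * b| = (j:ℝ) * b - k * a := by
    intro k hk
    have hk' : (k:ℝ) + 1 ≤ m := by exact_mod_cast mem_range.mp hk
    rw [abs_of_nonpos (by nlinarith)]; ring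
  have e2 : ∀ k ∈ Ico m b, |(k : ℝ) * a - j * b| = (k:ℝ) * a - j * b := by
    intro k hk
    have hk' : (m:ℝ) ≤ k := by exact_mod_cast (mem_Ico.mp hk).1
    rw [abs_of_nonneg (by nlinarith)]
  rw [hsplit, sum_congr rfl e1, sum_congr rfl e2,
    Finset.sum_Ico_eq_sub _ hm]
  have A : ∑ k ∈ range m, ((j:ℝ) * b - k * a) = m * (j * b) - (m * (m-1) / 2) * a := by
    rw [Finset.sum_sub_distrib, Finset.sum_const, Finset.card_range, nsmul_eq_mul, ← Finset.sum_mul, Sab_sum_id]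
  have B : ∀ n : ℕ, ∑ k ∈ range n, ((k:ℝ) * a - j * b) = (n * (n-1) / 2) * a - n * (j * b) := by
    intro n
    rw [Finset.sum_sub_distrib, Finset.sum_const, Finset.card_range, nsmul_eq_mul, ← Finset.sum_mul, Sab_sum_id]
  rw [A, B, B]
  have hrm : (r:ℝ) = a * m - j * b := by linarith
  rw [hrm]
  field_simp
  ring

theorem S_ab (a b : ℕ) (ha : 0 < a) (hb : 0 < b) (hab : Nat.gcd a b = 1) :
    ∑ j ∈ Finset.range a, ∑ k ∈ Finset.range b,
      |(k : ℝ) / b - (j : ℝ) / a| =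
    (2 * (a : ℝ)^2 * (b : ℝ)^2 - 3 * a * b + (a : ℝ)^2 + (b : ℝ)^2 - 1) / (6 * a * b) := by
  have haR : (0:ℝ) < a := by exact_mod_cast ha
  have hbR : (0:ℝ) < b := by exact_mod_cast hb
  set r : ℕ → ℕ := fun j => (a - (j * b) % a) % a with hrdef
  have hrlt : ∀ j, r j < a := fun j => Nat.mod_lt _ ha
  have hdvd : ∀ j, a ∣ j * b + r j := by
    intro j
    have hs : (j * b) % a < a := Nat.mod_lt _ ha
    by_cases h0 : (j * b) % a = 0
    · have hr0 : r j = 0 := by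
        simp only [hrdef, h0, Nat.sub_zero, Nat.mod_self]
      rw [hr0, Nat.add_zero]
      exact Nat.dvd_of_mod_eq_zero h0
    · have h7 : r j = a - (j * b) % a := by
        simp only [hrdef]
        exact Nat.mod_eq_of_lt (by omega)
      have hcalc : j * b + r j = a * (j * b / a + 1) := by
        rw [h7]
        calc j * b + (a - (j * b) % a)
            = a * (j * b / a) + (j * b) % a + (a - (j * b) % a) := by
              rw [Nat.div_add_mod]
          _ = a * (j * b / a) + a := by omega
          _ = a * (j * b / a + 1) := by rw [Nat.mul_add, Nat.mul_one]
      exact ⟨j * b / a + 1, hcalc⟩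
  -- m j
  set m : ℕ → ℕ := fun j => (j * b + r j) / a with hmdef
  have hm1 : ∀ j, a * m j = j * b + r j := fun j => Nat.mul_div_cancel' (hdvd j) -- check direction
  have hmle : ∀ j, j < a → m j ≤ b := by
    intro j hj
    have hjb : j * b < a * b := by
      exact Nat.mul_lt_mul_of_lt_of_le hj le_rfl hb
    have h2 : a * m j < a * (b + 1) := by
      have := hm1 j
      have := hrlt j
      rw [Nat.mul_add, Nat.mul_one]
      omega
    exact Nat.lt_succ_iff.mp (Nat.lt_of_mul_lt_mul_left h2)
  -- injectivity of r on range a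
  have hinj : ∀ i ∈ range a, ∀ j ∈ range a, r i = r j → i = j := by
    intro i hi j hj hij
    have h1 : i * b + r i ≡ 0 [MOD a] := (Nat.modEq_zero_iff_dvd).mpr (hdvd i)
    have h2 : j * b + r j ≡ 0 [MOD a] := (Nat.modEq_zero_iff_dvd).mpr (hdvd j)
    rw [hij] at h1
    have h3 : i * b + r j ≡ j * b + r j [MOD a] := h1.trans h2.symm
    have h4 : i * b ≡ j * b [MOD a] := Nat.ModEq.add_right_cancel' _ h3
    have h5 : i ≡ j [MOD a] := h4.cancel_right_of_coprime hab
    have hi' := mem_range.mp hi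
    have hj' := mem_range.mp hj
    unfold Nat.ModEq at h5
    rw [Nat.mod_eq_of_lt hi', Nat.mod_eq_of_lt hj'] at h5
    exact h5
  have himg : Finset.image r (range a) = range a := by
    apply Finset.eq_of_subset_of_card_le
    · intro t ht
      obtain ⟨j, hj, rfl⟩ := Finset.mem_image.mp ht
      exact mem_range.mpr (hrlt j)
    · rw [Finset.card_image_of_injOn (fun i hi j hj h => hinj i hi j hj h)]
  have hsum_r : ∀ F : ℕ → ℝ, ∑ j ∈ range a, F (r j) = ∑ t ∈ range a, F t := by
    intro F
    conv_rhs => rw [← himg]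
    rw [Finset.sum_image hinj]
  have h3 : ∑ j ∈ range a, ((r j : ℝ)) = a * (a-1) / 2 := by
    rw [hsum_r (fun t => (t:ℝ)), Sab_sum_id]
  have h4 : ∑ j ∈ range a, ((r j : ℝ))^2 = a * (a-1) * (2*a-1) / 6 := by
    rw [hsum_r (fun t => (t:ℝ)^2), Sab_sum_sq]
  have key : ∀ j ∈ range a, ∑ k ∈ range b, |(k : ℝ) / b - (j : ℝ) / a| =
      ((a:ℝ) * b * (b-1) / 2 + (b - b^2) * (j:ℝ) + (b^2/a) * (j:ℝ)^2
        + (r j : ℝ) + (-1/a) * ((r j : ℝ))^2) / (a * b) := by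
    intro j hj
    have habs : ∀ k : ℕ, |(k : ℝ) / b - (j : ℝ) / a| = |(k:ℝ) * a - j * b| / (a * b) := by
      intro k
      rw [show (k : ℝ) / b - (j : ℝ) / a = ((k:ℝ) * a - j * b) / (a * b) by
        field_simp, abs_div, abs_of_pos (mul_pos haR hbR)]
    rw [sum_congr rfl (fun k _ => habs k), ← Finset.sum_div,
      Sab_inner a b j (m j) (r j) ha (hm1 j) (hrlt j) (hmle j (mem_range.mp hj))]
    ring
  rw [sum_congr rfl key, ← Finset.sum_div]
  simp only [Finset.sum_add_distrib]
  rw [← Finset.mul_sum, ← Finset.mul_sum, ← Finset.mul_sum, Finset.sum_const,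
    Finset.card_range, nsmul_eq_mul, Sab_sum_id, Sab_sum_sq, h3, h4]
  field_simp
  ring
end

section
/- The multiple Mahler measure m(x^a−1, x^b−1) := ∫_0^1 log|e^{2πiθa}−1| · log|e^{2πiθb}−1| dθ equals (π²/12)·gcd(a,b)²/(ab) for all positive integers a and b. -/
open Real MeasureTheory Filter intervalIntegral


noncomputable def LL (r : ℝ) (x : ℝ) : ℝ := Real.log ‖1 - r * Complex.exp (x * Complex.I)‖

lemma LL_sq (r x : ℝ) :
    (‖1 - r * Complex.exp (x * Complex.I)‖)^2 = 1 - 2*r*Real.cos x + r^2 := by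
  rw [Complex.sq_norm, Complex.normSq_apply]
  simp [Complex.exp_mul_I, Complex.cos_ofReal_re, Complex.sin_ofReal_re, Complex.cos_ofReal_im, Complex.sin_ofReal_im, Complex.add_re, Complex.add_im,
    Complex.mul_re, Complex.mul_im]
  nlinarith [Real.sin_sq_add_cos_sq x]

lemma LL_abs_lb {r : ℝ} (h0 : 0 ≤ r) (h1 : r ≤ 1) (x : ℝ) :
    |Real.sin x| ≤ ‖1 - r * Complex.exp (x * Complex.I)‖ := by
  have h := LL_sq r x
  have hA : (0:ℝ) ≤ ‖1 - r * Complex.exp (x * Complex.I)‖ := norm_nonneg _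
  nlinarith [Real.sin_sq_add_cos_sq x, abs_nonneg (Real.sin x), sq_abs (Real.sin x),
    sq_nonneg (Real.cos x - r), sq_nonneg (|Real.sin x| - ‖1 - r * Complex.exp (x * Complex.I)‖)]

lemma LL_abs_ub {r : ℝ} (h0 : 0 ≤ r) (h1 : r ≤ 1) (x : ℝ) :
    ‖1 - r * Complex.exp (x * Complex.I)‖ ≤ 2 := by
  have h := LL_sq r x
  have hA : (0:ℝ) ≤ ‖1 - r * Complex.exp (x * Complex.I)‖ := norm_nonneg _
  nlinarith [Real.neg_one_le_cos x]


lemma LL_bound {r : ℝ} (h0 : 0 ≤ r) (h1 : r ≤ 1) {x : ℝ} (hx : Real.sin x ≠ 0) :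
    |LL r x| ≤ Real.log 2 + |Real.log (|Real.sin x|)| := by
  set A := ‖1 - r * Complex.exp (x * Complex.I)‖ with hA
  have hs : 0 < |Real.sin x| := abs_pos.2 hx
  have hs1 : |Real.sin x| ≤ 1 := abs_le.2 ⟨Real.neg_one_le_sin x, Real.sin_le_one x⟩
  have hlb := LL_abs_lb h0 h1 x
  have hub := LL_abs_ub h0 h1 x
  have hApos : 0 < A := lt_of_lt_of_le hs hlb
  have hlogs : Real.log |Real.sin x| ≤ 0 := Real.log_nonpos (abs_nonneg _) hs1
  rw [abs_le]
  constructor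
  · have : Real.log |Real.sin x| ≤ Real.log A := Real.log_le_log hs hlb
    have h2 : (0:ℝ) < Real.log 2 := Real.log_pos (by norm_num)
    rw [abs_of_nonpos hlogs]
    simp only [LL, ← hA]
    linarith
  · have : Real.log A ≤ Real.log 2 := Real.log_le_log hApos hub
    simp only [LL, ← hA]
    have := abs_nonneg (Real.log |Real.sin x|)
    linarith

lemma hasSum_LL {r : ℝ} (h0 : 0 ≤ r) (h1 : r < 1) (x : ℝ) :
    HasSum (fun k : ℕ => -(r ^ k * Real.cos (k * x) / k)) (LL r x) := by
  set z : ℂ := r * Complex.exp (x * Complex.I) with hz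
  have hznorm : ‖z‖ < 1 := by
    rw [hz]
    simp only [norm_mul, Complex.norm_real, Real.norm_eq_abs, abs_of_nonneg h0]
    rw [Complex.norm_exp_ofReal_mul_I]
    simpa using h1
  have H := Complex.hasSum_taylorSeries_neg_log hznorm
  have H2 := Complex.hasSum_re H
  have hre : ∀ k : ℕ, (z ^ k / (k:ℂ)).re = r ^ k * Real.cos (k * x) / k := by
    intro k
    have hzk : z ^ k = ((r ^ k : ℝ) : ℂ) * Complex.exp ((k * x : ℝ) * Complex.I) := by
      rw [hz, mul_pow, ← Complex.exp_nat_mul]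
      push_cast
      ring_nf
    rcases Nat.eq_zero_or_pos k with rfl | hk
    · simp
    · rw [hzk, div_eq_mul_inv, ← Complex.ofReal_natCast, ← Complex.ofReal_inv]
      rw [mul_comm (((r ^ k : ℝ)) : ℂ) _, mul_assoc, ← Complex.ofReal_mul,
        Complex.mul_re, Complex.ofReal_re, Complex.ofReal_im, Complex.exp_ofReal_mul_I_re]
      simp
      ring
  have H3 : HasSum (fun k : ℕ => r ^ k * Real.cos (k * x) / k) (-Real.log ‖1 - z‖) := by
    have := H2
    simp only [hre, Complex.neg_re, Complex.log_re] at this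
    exact this
  have := H3.neg
  rw [neg_neg] at this
  simpa only [LL, ← hz] using this


lemma integral_cos_2pi (K : ℤ) : ∫ θ in (0:ℝ)..1, Real.cos (2*π*K*θ) = if K = 0 then 1 else 0 := by
  rcases eq_or_ne K 0 with rfl | hK
  · simp
  · rw [if_neg hK]
    have hc : (2*π*K : ℝ) ≠ 0 := by
      have := Real.pi_ne_zero
      simp [this, hK]
    have : ∀ θ:ℝ, Real.cos (2*π*K*θ) = Real.cos ((2*π*K)*θ) := by intro θ; ring_nf
    rw [intervalIntegral.integral_comp_mul_left (fun x => Real.cos x) hc]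
    simp only [mul_zero, mul_one]
    rw [integral_cos]
    have : Real.sin (2*π*K) = 0 := by
      have := Real.sin_int_mul_pi (2*K)
      push_cast at this ⊢
      rw [show (2:ℝ)*π*(K:ℝ) = (2*(K:ℝ))*π by ring]
      exact this
    simp [this]

lemma integral_cos_mul_cos (M N : ℕ) (hM : 0 < M) (hN : 0 < N) :
    ∫ θ in (0:ℝ)..1, Real.cos (2*π*M*θ) * Real.cos (2*π*N*θ) = if M = N then 1/2 else 0 := by
  have hid : ∀ θ:ℝ, Real.cos (2*π*M*θ) * Real.cos (2*π*N*θ)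
      = (Real.cos (2*π*((M:ℤ)-(N:ℤ))*θ) + Real.cos (2*π*((M:ℤ)+(N:ℤ))*θ)) / 2 := by
    intro θ
    push_cast
    rw [show (2*π*((M:ℝ)-N)*θ) = 2*π*M*θ - 2*π*N*θ by ring,
       show (2*π*((M:ℝ)+N)*θ) = 2*π*M*θ + 2*π*N*θ by ring,
       Real.cos_sub, Real.cos_add]
    ring
  rw [intervalIntegral.integral_congr (g := fun θ => (Real.cos (2*π*((M:ℤ)-(N:ℤ))*θ) + Real.cos (2*π*((M:ℤ)+(N:ℤ))*θ)) / 2) (fun θ _ => hid θ)]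
  have i1 : IntervalIntegrable (fun θ:ℝ => Real.cos (2*π*((M:ℤ)-(N:ℤ))*θ)) MeasureTheory.volume 0 1 :=
    (Real.continuous_cos.comp (by continuity)).intervalIntegrable 0 1
  have i2 : IntervalIntegrable (fun θ:ℝ => Real.cos (2*π*((M:ℤ)+(N:ℤ))*θ)) MeasureTheory.volume 0 1 :=
    (Real.continuous_cos.comp (by continuity)).intervalIntegrable 0 1
  push_cast at i1 i2 ⊢
  simp only [div_eq_mul_inv]
  have e1 := integral_cos_2pi ((M:ℤ)-N)
  have e2 := integral_cos_2pi ((M:ℤ)+N)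
  push_cast at e1 e2
  rw [intervalIntegral.integral_mul_const, intervalIntegral.integral_add i1 i2, e1, e2]
  have hMN : ¬((M:ℤ) + N = 0) := by positivity
  rw [if_neg hMN]
  by_cases h : M = N
  · subst h; simp
  · rw [if_neg (by exact_mod_cast sub_ne_zero.2 (by exact_mod_cast fun hc => h (Nat.cast_injective hc) : (M:ℤ) ≠ N)), if_neg h]
    simp


noncomputable def Q (x : ℝ) : ℝ := (Real.log 2 + |Real.log (|Real.sin x|)|)^2

lemma Q_meas : Measurable Q := by
  apply Measurable.pow_const
  apply Measurable.add measurable_const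
  exact (Real.measurable_log.comp ((continuous_abs.comp Real.continuous_sin).measurable)).abs

lemma Q_nonneg (x : ℝ) : 0 ≤ Q x := sq_nonneg _

lemma log_sq_le {x : ℝ} (hx : 0 < x) (hx1 : x ≤ 1) : (Real.log x)^2 ≤ 16 * x ^ (-(1/2) : ℝ) := by
  have h4 : (0:ℝ) < x ^ (-(1/4) : ℝ) := Real.rpow_pos_of_pos hx _
  have hlog : Real.log (x ^ (-(1/4):ℝ)) ≤ x ^ (-(1/4):ℝ) - 1 := Real.log_le_sub_one_of_pos h4
  rw [Real.log_rpow hx] at hlog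
  have hlognp : Real.log x ≤ 0 := Real.log_nonpos hx.le hx1
  have habs : -Real.log x ≤ 4 * x ^ (-(1/4):ℝ) := by linarith
  have hsq : (Real.log x)^2 ≤ (4 * x ^ (-(1/4):ℝ))^2 := by nlinarith
  calc (Real.log x)^2 ≤ (4 * x ^ (-(1/4):ℝ))^2 := hsq
    _ = 16 * (x ^ (-(1/4):ℝ))^2 := by ring
    _ = 16 * x ^ (-(1/2):ℝ) := by
        rw [← Real.rpow_natCast (x ^ (-(1/4):ℝ)) 2, ← Real.rpow_mul hx.le]
        norm_num

lemma Q_le {x : ℝ} (hx : 0 < x) (hx1 : x ≤ 1) : Q x ≤ 18 + 32 * x ^ (-(1/2) : ℝ) := by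
  have hsinpos : 0 < Real.sin x := Real.sin_pos_of_pos_of_lt_pi hx (lt_of_le_of_lt hx1 (by
    have := Real.pi_gt_three; linarith))
  have habs : |Real.sin x| = Real.sin x := abs_of_pos hsinpos
  have hsin_le : Real.sin x ≤ x := Real.sin_le hx.le
  have hsin_ge : x/2 ≤ Real.sin x := by
    have h2 : x ≤ π/2 := by
      have := Real.pi_gt_three; linarith
    have := Real.mul_le_sin (x := x) hx.le h2
    have hpi : (1:ℝ)/2 ≤ 2/π := by
      have h1 := Real.pi_le_four
      have h2 := Real.pi_pos
      rw [div_le_div_iff₀ (by norm_num) h2]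
      linarith
    nlinarith [Real.pi_pos]
  -- |log sin x| ≤ log 2 + |log x|
  have hlogsin : |Real.log (Real.sin x)| ≤ Real.log 2 + |Real.log x| := by
    have l1 : Real.log (Real.sin x) ≤ Real.log x := Real.log_le_log hsinpos hsin_le
    have l2 : Real.log x - Real.log 2 ≤ Real.log (Real.sin x) := by
      have := Real.log_le_log (by positivity : (0:ℝ) < x/2) hsin_ge
      rwa [Real.log_div hx.ne' (by norm_num)] at this
    have hlx : Real.log x ≤ 0 := Real.log_nonpos hx.le hx1
    have h2 : (0:ℝ) < Real.log 2 := Real.log_pos (by norm_num)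
    rw [abs_le, abs_of_nonpos hlx]
    constructor <;> linarith
  have h2 : (0:ℝ) < Real.log 2 := Real.log_pos (by norm_num)
  have hlog2 : Real.log 2 ≤ 1 := by
    have := Real.log_le_sub_one_of_pos (by norm_num : (0:ℝ) < 2); linarith
  have hQ : Q x ≤ (2 * Real.log 2 + |Real.log x|)^2 := by
    rw [Q, habs]
    have : 0 ≤ Real.log 2 + |Real.log (Real.sin x)| := by positivity
    nlinarith [abs_nonneg (Real.log (Real.sin x)), abs_nonneg (Real.log x)]
  have hls := log_sq_le hx hx1
  calc Q x ≤ (2 * Real.log 2 + |Real.log x|)^2 := hQ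
    _ ≤ 2 * (2*Real.log 2)^2 + 2 * (Real.log x)^2 := by nlinarith [sq_abs (Real.log x), sq_nonneg (2*Real.log 2 - |Real.log x|)]
    _ ≤ 18 + 32 * x ^ (-(1/2):ℝ) := by nlinarith

lemma Q_int_01 : IntervalIntegrable Q volume 0 1 := by
  have hbound : IntervalIntegrable (fun x:ℝ => 18 + 32 * x ^ (-(1/2):ℝ)) volume 0 1 :=
    (_root_.intervalIntegrable_const (c := (18:ℝ))).add ((intervalIntegral.intervalIntegrable_rpow' (by norm_num)).const_mul 32)
  rw [intervalIntegrable_iff, Set.uIoc_of_le (by norm_num : (0:ℝ) ≤ 1)] at hbound ⊢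
  apply Integrable.mono' hbound (Q_meas.aestronglyMeasurable)
  refine (ae_restrict_iff' measurableSet_Ioc).2 (Filter.Eventually.of_forall ?_)
  intro x hx
  rw [Real.norm_eq_abs, abs_of_nonneg (Q_nonneg x)]
  exact Q_le hx.1 hx.2


lemma Q_per : Function.Periodic Q π := by
  intro x
  simp [Q, Real.sin_add_pi, abs_neg]

lemma Q_contOn {s : Set ℝ} (hs : ∀ x ∈ s, Real.sin x ≠ 0) : ContinuousOn Q s := by
  apply ContinuousOn.pow
  apply ContinuousOn.add continuousOn_const
  apply ContinuousOn.abs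
  apply ContinuousOn.log (Real.continuous_sin.continuousOn.abs)
  intro x hx
  simpa using hs x hx

lemma Q_int_0_pi : IntervalIntegrable Q volume 0 π := by
  have hpi := Real.pi_gt_three
  have h1 : IntervalIntegrable Q volume 1 (π/2) := by
    apply (Q_contOn ?_).intervalIntegrable
    intro x hx
    rw [Set.uIcc_of_le (by linarith)] at hx
    exact (Real.sin_pos_of_pos_of_lt_pi (by linarith [hx.1]) (by linarith [hx.2, Real.pi_pos])).ne'
  have h0 : IntervalIntegrable Q volume 0 (π/2) := Q_int_01.trans h1
  have h2 : IntervalIntegrable Q volume (π/2) π := by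
    have h := h0.comp_sub_left π
    have he : (fun x => Q (π - x)) = Q := by
      funext x
      simp [Q, Real.sin_pi_sub]
    rw [he, sub_zero] at h
    have e : π - π/2 = π/2 := by ring
    rw [e] at h
    exact h.symm
  exact h0.trans h2

lemma Q_int_0_n (n : ℕ) : IntervalIntegrable Q volume 0 (n*π) := by
  induction n with
  | zero => simp
  | succ n ih =>
      refine ih.trans ?_
      have h := Q_int_0_pi.comp_sub_right (n*π)
      have he : (fun x => Q (x - n*π)) = Q := by
        funext x
        simpa using Q_per.sub_nat_mul_eq n
      rw [he] at h
      simp only [zero_add] at h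
      push_cast
      have e : ((n:ℝ)+1)*π = π + n*π := by ring
      rw [e]
      exact h

lemma Q_comp_int (c : ℕ) (hc : 0 < c) : IntervalIntegrable (fun θ => Q (2*π*c*θ)) volume 0 1 := by
  have h2c : IntervalIntegrable Q volume 0 (((2*c : ℕ):ℝ)*π) := Q_int_0_n (2*c)
  have hne : (2*π*(c:ℝ)) ≠ 0 := by
    have := Real.pi_ne_zero
    positivity
  have h := h2c.comp_mul_left (c := 2*π*c) enorm_ne_top enorm_ne_top
  have : ((2*(c:ℕ) : ℕ):ℝ)*π = 2*π*c := by push_cast; ring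
  rw [this, zero_div, div_self hne] at h
  exact h


noncomputable def Jt (a b : ℕ) (r : ℝ) (p : ℕ × ℕ) : ℝ :=
  if a*p.1 = b*p.2 ∧ p.1 ≠ 0 then r^(p.1+p.2) / (2*(p.1:ℝ)*(p.2:ℝ)) else 0

lemma step1 (a b : ℕ) (ha : 0 < a) (hb : 0 < b) {r : ℝ} (h0 : 0 ≤ r) (h1 : r < 1) :
    HasSum (Jt a b r) (∫ θ in (0:ℝ)..1, LL r (2*π*a*θ) * LL r (2*π*b*θ)) := by
  -- the continuous summands
  set t : ℕ → ℕ → ℝ → ℝ := fun c k θ => -(r ^ k * Real.cos (k * (2*π*c*θ)) / k) with ht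
  have tcont : ∀ c k, Continuous (t c k) := by
    intro c k
    apply Continuous.neg
    apply Continuous.div_const
    exact continuous_const.mul (Real.continuous_cos.comp (by continuity))
  set F : ℕ × ℕ → C(ℝ, ℝ) := fun p => ⟨fun θ => t a p.1 θ * t b p.2 θ,
    ((tcont a p.1).mul (tcont b p.2))⟩ with hF
  -- sup norm bound
  have hFle : ∀ p : ℕ × ℕ, ∀ θ : ℝ, |t a p.1 θ * t b p.2 θ| ≤ r ^ p.1 * r ^ p.2 := by
    intro p θ
    have hb1 : ∀ c k, |t c k θ| ≤ r ^ k := by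
      intro c k
      rw [ht]
      simp only [abs_neg, abs_div, abs_mul]
      rcases Nat.eq_zero_or_pos k with rfl | hk
      · simp
      · rw [abs_of_nonneg (pow_nonneg h0 k)]
        have h2 : |(k:ℝ)| = (k:ℝ) := abs_of_nonneg (Nat.cast_nonneg k)
        rw [h2, div_le_iff₀ (by exact_mod_cast hk)]
        have := abs_cos_le_one ((k:ℝ) * (2*π*c*θ))
        have hk1 : (1:ℝ) ≤ (k:ℝ) := by exact_mod_cast hk
        nlinarith [pow_nonneg h0 k, abs_nonneg (Real.cos ((k:ℝ) * (2*π*c*θ)))]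
    rw [abs_mul]
    exact mul_le_mul (hb1 a p.1) (hb1 b p.2) (abs_nonneg _) (pow_nonneg h0 _)
  have hsummable : Summable (fun p : ℕ × ℕ => r ^ p.1 * r ^ p.2) :=
    (summable_geometric_of_lt_one h0 h1).mul_of_nonneg (summable_geometric_of_lt_one h0 h1)
      (fun k => pow_nonneg h0 k) (fun k => pow_nonneg h0 k)
  have hnorm : Summable fun p : ℕ × ℕ => ‖(F p).restrict (⟨Set.uIcc (0:ℝ) 1, isCompact_uIcc⟩ : TopologicalSpace.Compacts ℝ)‖ := by
    apply hsummable.of_nonneg_of_le (fun p => norm_nonneg _)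
    intro p
    apply ContinuousMap.norm_le _ (by positivity) |>.2
    rintro ⟨x, hx⟩
    simpa [hF, abs_mul] using hFle p x
  -- interchange
  have hswap := intervalIntegral.hasSum_intervalIntegral_of_summable_norm (a := (0:ℝ)) (b := 1) hnorm
  -- pointwise sum equals product of LL's
  have hptwise : ∀ θ : ℝ, ∑' p : ℕ × ℕ, F p θ = LL r (2*π*a*θ) * LL r (2*π*b*θ) := by
    intro θ
    have h1s := hasSum_LL h0 h1 (2*π*a*θ)
    have h2s := hasSum_LL h0 h1 (2*π*b*θ)
    have hsm : Summable fun p : ℕ × ℕ => t a p.1 θ * t b p.2 θ := by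
      apply Summable.of_norm
      apply hsummable.of_nonneg_of_le (fun p => norm_nonneg _)
      intro p
      simpa [abs_mul] using hFle p θ
    exact (h1s.mul h2s hsm).tsum_eq
  have hswap2 : HasSum (fun p : ℕ × ℕ => ∫ θ in (0:ℝ)..1, F p θ)
      (∫ θ in (0:ℝ)..1, LL r (2*π*a*θ) * LL r (2*π*b*θ)) := by
    have he : (∫ x in (0:ℝ)..1, ∑' (i : ℕ × ℕ), (F i) x)
        = ∫ θ in (0:ℝ)..1, LL r (2*π*a*θ) * LL r (2*π*b*θ) :=
      intervalIntegral.integral_congr (fun θ _ => hptwise θ)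
    rwa [he] at hswap
  -- compute each integral
  have hcompute : ∀ p : ℕ × ℕ, (∫ θ in (0:ℝ)..1, F p θ) = Jt a b r p := by
    rintro ⟨m, n⟩
    rcases Nat.eq_zero_or_pos m with rfl | hm
    · simp only [hF, ContinuousMap.coe_mk, ht, Jt]
      norm_num
    rcases Nat.eq_zero_or_pos n with rfl | hn
    · simp only [hF, ContinuousMap.coe_mk, ht, Jt]
      have : ¬(a*m = b*0 ∧ m ≠ 0) := by
        rintro ⟨h, hm0⟩
        simp at h
        rcases h with h | h
        · exact ha.ne' h
        · exact hm0 h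
      norm_num [this]
    · have key : ∀ θ:ℝ, F (m,n) θ =
          (r^m * r^n / ((m:ℝ)*(n:ℝ))) * (Real.cos (2*π*(a*m : ℕ)*θ) * Real.cos (2*π*(b*n : ℕ)*θ)) := by
        intro θ
        simp only [hF, ContinuousMap.coe_mk, ht]
        rw [show ((m:ℝ) * (2*π*a*θ)) = 2*π*((a*m : ℕ):ℝ)*θ by push_cast; ring,
          show ((n:ℝ) * (2*π*b*θ)) = 2*π*((b*n : ℕ):ℝ)*θ by push_cast; ring]
        field_simp
      rw [intervalIntegral.integral_congr (g := fun θ => (r^m * r^n / ((m:ℝ)*(n:ℝ))) * (Real.cos (2*π*(a*m : ℕ)*θ) * Real.cos (2*π*(b*n : ℕ)*θ))) (fun θ _ => key θ)]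
      rw [intervalIntegral.integral_const_mul, integral_cos_mul_cos (a*m) (b*n) (by positivity) (by positivity)]
      rw [Jt]
      by_cases hc : a*m = b*n
      · rw [if_pos hc, if_pos ⟨hc, hm.ne'⟩, ← pow_add]
        have hm' : (m:ℝ) ≠ 0 := Nat.cast_ne_zero.2 hm.ne'
        have hn' : (n:ℝ) ≠ 0 := Nat.cast_ne_zero.2 hn.ne'
        rw [div_mul_eq_mul_div, mul_one_div, div_div]
        congr 1
        ring
      · rw [if_neg hc, if_neg (by tauto), mul_zero]
  exact hswap2.congr_fun (fun p => (hcompute p).symm)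


noncomputable def gk (a' b' : ℕ) (r : ℝ) (k : ℕ) : ℝ :=
  r^((a'+b')*(k+1)) / (2*(a':ℝ)*(b':ℝ)*((k:ℝ)+1)^2)

lemma reindex (a b : ℕ) (ha : 0 < a) (hb : 0 < b) (r : ℝ) (S : ℝ) :
    HasSum (Jt a b r) S ↔ HasSum (gk (a / Nat.gcd a b) (b / Nat.gcd a b) r) S := by
  set g := Nat.gcd a b with hg
  have hgpos : 0 < g := Nat.gcd_pos_of_pos_left b ha
  set a' := a / g with ha'
  set b' := b / g with hb'
  have ha'pos : 0 < a' := Nat.div_pos (Nat.le_of_dvd ha (Nat.gcd_dvd_left a b)) hgpos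
  have hb'pos : 0 < b' := Nat.div_pos (Nat.le_of_dvd hb (Nat.gcd_dvd_right a b)) hgpos
  have haeq : a = g * a' := by rw [ha', Nat.mul_div_cancel' (Nat.gcd_dvd_left a b)]
  have hbeq : b = g * b' := by rw [hb', Nat.mul_div_cancel' (Nat.gcd_dvd_right a b)]
  have hco : Nat.Coprime a' b' := Nat.coprime_div_gcd_div_gcd hgpos
  refine hasSum_iff_hasSum_of_ne_zero_bij
    (fun k => (b'*((k:ℕ)+1), a'*((k:ℕ)+1))) ?_ ?_ ?_
  · rintro ⟨k1, hk1⟩ ⟨k2, hk2⟩ h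
    simp only [Prod.mk.injEq] at h
    have := Nat.eq_of_mul_eq_mul_left hb'pos h.1
    exact Subtype.ext (Nat.succ_injective this)
  · rintro ⟨m, n⟩ hp
    rw [Function.mem_support, Jt] at hp
    by_cases hcond : a*m = b*n ∧ m ≠ 0
    swap
    · rw [if_neg hcond] at hp; exact absurd rfl hp
    rw [if_pos hcond] at hp
    obtain ⟨hmn, hm0⟩ := hcond
    have hrne : r ≠ 0 := by
      intro hr
      apply hp
      rw [hr, zero_pow (by omega : m + n ≠ 0), zero_div]
    have hmn' : a' * m = b' * n := by
      have : g * (a' * m) = g * (b' * n) := by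
        rw [← mul_assoc, ← mul_assoc, ← haeq, ← hbeq]; exact hmn
      exact Nat.eq_of_mul_eq_mul_left hgpos this
    have hdvd : b' ∣ m := by
      apply Nat.Coprime.dvd_of_dvd_mul_right hco.symm
      exact Dvd.intro n (by rw [← hmn']; ring)
    obtain ⟨t, ht⟩ := hdvd
    have ht0 : t ≠ 0 := by rintro rfl; simp at ht; exact hm0 ht
    have hn : n = a' * t := by
      have h1 : b' * n = b' * (a' * t) := by
        rw [← hmn', ht]; ring
      exact Nat.eq_of_mul_eq_mul_left hb'pos h1
    have hmem : (t - 1) ∈ Function.support (gk a' b' r) := by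
      rw [Function.mem_support, gk]
      have h1 : t - 1 + 1 = t := Nat.succ_pred_eq_of_pos (Nat.pos_of_ne_zero ht0)
      apply div_ne_zero
      · exact pow_ne_zero _ hrne
      · have h2 : (((t-1 : ℕ):ℝ) + 1) ≠ 0 := by positivity
        positivity
    refine ⟨⟨t - 1, hmem⟩, ?_⟩
    have h1 : t - 1 + 1 = t := Nat.succ_pred_eq_of_pos (Nat.pos_of_ne_zero ht0)
    simp only [h1]
    rw [Prod.mk.injEq]
    constructor
    · rw [ht]
    · rw [hn]
  · rintro ⟨k, hk⟩
    simp only [Jt, gk]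
    have hcond : a * (b'*(k+1)) = b * (a'*(k+1)) ∧ b'*(k+1) ≠ 0 := by
      constructor
      · rw [haeq, hbeq]; ring
      · positivity
    rw [if_pos hcond]
    have hexp : b'*(k+1) + a'*(k+1) = (a'+b')*(k+1) := by ring
    rw [hexp]
    congr 1
    push_cast
    ring


noncomputable def rr (j : ℕ) : ℝ := 1 - 1/(j+1)

lemma rr_nonneg (j : ℕ) : 0 ≤ rr j := by
  rw [rr]
  have h1 : (0:ℝ) < (j:ℝ)+1 := by positivity
  have : 1/((j:ℝ)+1) ≤ 1 := by
    rw [div_le_one h1]; linarith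
  linarith

lemma rr_lt_one (j : ℕ) : rr j < 1 := by
  rw [rr]
  have h1 : (0:ℝ) < 1/((j:ℝ)+1) := by positivity
  linarith

lemma rr_tendsto : Tendsto rr atTop (nhds 1) := by
  have h := tendsto_one_div_add_atTop_nhds_zero_nat (𝕜 := ℝ)
  have h2 := (tendsto_const_nhds (x := (1:ℝ)) (f := atTop (α := ℕ))).sub h
  rw [sub_zero] at h2
  exact Tendsto.congr (fun j => rfl) h2

lemma gk_hasSum_limit (a' b' : ℕ) (ha' : 0 < a') (hb' : 0 < b') :
    HasSum (gk a' b' 1) (π^2 / (12*(a':ℝ)*(b':ℝ))) := by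
  have h := hasSum_zeta_two
  have h1 : HasSum (fun n : ℕ => (1:ℝ)/(((n+1:ℕ)):ℝ)^2) (π^2/6) := by
    rw [hasSum_nat_add_iff (f := fun n : ℕ => (1:ℝ)/(n:ℝ)^2) 1]
    simpa using h
  have h3 : (fun k : ℕ => (1:ℝ)/(2*(a':ℝ)*(b':ℝ)) * ((1:ℝ)/(((k+1:ℕ)):ℝ)^2)) = gk a' b' 1 := by
    funext k
    rw [gk]
    push_cast
    simp only [one_pow]
    field_simp
  have h4 : (1:ℝ)/(2*(a':ℝ)*(b':ℝ)) * (π^2/6) = π^2/(12*(a':ℝ)*(b':ℝ)) := by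
    field_simp
    ring
  rw [← h3, ← h4]
  exact h1.mul_left _

lemma sum_tendsto (a' b' : ℕ) (ha' : 0 < a') (hb' : 0 < b') :
    Tendsto (fun j => ∑' k, gk a' b' (rr j) k) atTop (nhds (π^2 / (12*(a':ℝ)*(b':ℝ)))) := by
  have hlim := gk_hasSum_limit a' b' ha' hb'
  rw [← hlim.tsum_eq]
  apply tendsto_tsum_of_dominated_convergence (bound := gk a' b' 1)
  · exact hlim.summable
  · intro k
    rw [gk]
    apply Tendsto.div_const
    exact (rr_tendsto.pow _)
  · filter_upwards with j
    intro k
    rw [gk, gk, Real.norm_eq_abs, abs_div]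
    have hd : (0:ℝ) < 2*(a':ℝ)*(b':ℝ)*((k:ℝ)+1)^2 := by positivity
    rw [abs_of_pos hd, one_pow, abs_pow, abs_of_nonneg (rr_nonneg j)]
    gcongr
    exact pow_le_one₀ (rr_nonneg j) (rr_lt_one j).le


lemma sin_zero_null (c : ℕ) (hc : 0 < c) :
    volume {θ : ℝ | Real.sin (2*π*c*θ) = 0} = 0 := by
  apply Set.Countable.measure_zero
  apply Set.Countable.mono ?_ (Set.countable_range (fun n : ℤ => (n : ℝ)/(2*c)))
  intro θ hθ
  rw [Set.mem_setOf_eq, Real.sin_eq_zero_iff] at hθ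
  obtain ⟨n, hn⟩ := hθ
  refine ⟨n, ?_⟩
  have hpi := Real.pi_ne_zero
  have hc' : (c:ℝ) ≠ 0 := Nat.cast_ne_zero.2 hc.ne'
  have hn' : (n:ℝ)*π = (2*c*θ)*π := by rw [hn]; ring
  have := mul_right_cancel₀ hpi hn'
  field_simp
  linarith

lemma LL_ne_one {r : ℝ} (h0 : 0 ≤ r) (h1 : r < 1) (z : ℝ) :
    (1 : ℂ) - r * Complex.exp (z * Complex.I) ≠ 0 := by
  intro h
  rw [sub_eq_zero] at h
  have : ‖(r:ℂ) * Complex.exp (z * Complex.I)‖ = r := by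
    rw [norm_mul, Complex.norm_exp_ofReal_mul_I, mul_one, Complex.norm_real, Real.norm_eq_abs, abs_of_nonneg h0]
  rw [← h] at this
  simp at this
  linarith [h1, this]

lemma LL_cont {r : ℝ} (h0 : 0 ≤ r) (h1 : r < 1) (c : ℝ) :
    Continuous (fun θ : ℝ => LL r (2*π*c*θ)) := by
  unfold LL
  have hgc : Continuous (fun θ : ℝ => ‖1 - r * Complex.exp ((2*π*c*θ : ℝ) * Complex.I)‖) :=
    continuous_norm.comp
      (continuous_const.sub (continuous_const.mul (Complex.continuous_exp.comp (by continuity))))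
  apply Continuous.log hgc
  intro θ
  exact fun hcon => LL_ne_one h0 h1 (2*π*c*θ) (norm_eq_zero.1 hcon)

lemma main_limit (a b : ℕ) (ha : 0 < a) (hb : 0 < b) :
    Tendsto (fun j => ∫ θ in (0:ℝ)..1, LL (rr j) (2*π*a*θ) * LL (rr j) (2*π*b*θ)) atTop
      (nhds (∫ θ in (0:ℝ)..1, LL 1 (2*π*a*θ) * LL 1 (2*π*b*θ))) := by
  apply intervalIntegral.tendsto_integral_filter_of_dominated_convergence
    (bound := fun θ => (Q (2*π*a*θ) + Q (2*π*b*θ))/2)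
  · filter_upwards with j
    exact (((LL_cont (rr_nonneg j) (rr_lt_one j) a).mul
      (LL_cont (rr_nonneg j) (rr_lt_one j) b)).aestronglyMeasurable).restrict
  · filter_upwards with j
    have hNa := sin_zero_null a ha
    have hNb := sin_zero_null b hb
    filter_upwards [(measure_eq_zero_iff_ae_notMem (μ := volume)).1 hNa,
      (measure_eq_zero_iff_ae_notMem (μ := volume)).1 hNb] with θ hna hnb _
    have h1 := LL_bound (rr_nonneg j) (rr_lt_one j).le hna
    have h2 := LL_bound (rr_nonneg j) (rr_lt_one j).le hnb
    rw [Real.norm_eq_abs, abs_mul, Q, Q]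
    have h3 : |LL (rr j) (2*π*a*θ)| * |LL (rr j) (2*π*b*θ)|
        ≤ (Real.log 2 + |Real.log (|Real.sin (2*π*a*θ)|)|) * (Real.log 2 + |Real.log (|Real.sin (2*π*b*θ)|)|) :=
      mul_le_mul h1 h2 (abs_nonneg _) (le_trans (abs_nonneg _) h1)
    nlinarith [sq_nonneg ((Real.log 2 + |Real.log (|Real.sin (2*π*a*θ)|)|) - (Real.log 2 + |Real.log (|Real.sin (2*π*b*θ)|)|))]
  · exact ((Q_comp_int a ha).add (Q_comp_int b hb)).div_const 2
  · have hNa := sin_zero_null a ha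
    have hNb := sin_zero_null b hb
    filter_upwards [(measure_eq_zero_iff_ae_notMem (μ := volume)).1 hNa,
      (measure_eq_zero_iff_ae_notMem (μ := volume)).1 hNb] with θ hna hnb _
    have key : ∀ c : ℕ, Real.sin (2*π*c*θ) ≠ 0 →
        Tendsto (fun j => LL (rr j) (2*π*c*θ)) atTop (nhds (LL 1 (2*π*c*θ))) := by
      intro c hc
      have hca : ContinuousAt (fun r : ℝ => LL r (2*π*c*θ)) 1 := by
        apply ContinuousAt.log
        · apply Continuous.continuousAt
          exact continuous_norm.comp
            (continuous_const.sub (Complex.continuous_ofReal.mul continuous_const))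
        · have := lt_of_lt_of_le (abs_pos.2 hc) (LL_abs_lb zero_le_one le_rfl (2*π*c*θ))
          simp only [Complex.ofReal_one, one_mul] at this ⊢
          exact this.ne'
      exact hca.tendsto.comp rr_tendsto
    exact (key a hna).mul (key b hnb)

open Real in
theorem mahler_xa_xb (a b : ℕ) (ha : 0 < a) (hb : 0 < b) :
    ∫ θ in (0:ℝ)..1,
        Real.log ‖Complex.exp (2 * π * Complex.I * θ * a) - 1‖ *
        Real.log ‖Complex.exp (2 * π * Complex.I * θ * b) - 1‖ =
    (π^2 / 12) * (Nat.gcd a b : ℝ)^2 / (a * b) := by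
  set g := Nat.gcd a b with hg
  have hgpos : 0 < g := Nat.gcd_pos_of_pos_left b ha
  set a' := a / g with ha'
  set b' := b / g with hb'
  have ha'pos : 0 < a' := Nat.div_pos (Nat.le_of_dvd ha (Nat.gcd_dvd_left a b)) hgpos
  have hb'pos : 0 < b' := Nat.div_pos (Nat.le_of_dvd hb (Nat.gcd_dvd_right a b)) hgpos
  have haeq : a = g * a' := by rw [ha', Nat.mul_div_cancel' (Nat.gcd_dvd_left a b)]
  have hbeq : b = g * b' := by rw [hb', Nat.mul_div_cancel' (Nat.gcd_dvd_right a b)]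
  have hseq : ∀ j, (∫ θ in (0:ℝ)..1, LL (rr j) (2*π*a*θ) * LL (rr j) (2*π*b*θ))
      = ∑' k, gk a' b' (rr j) k := by
    intro j
    have h1 := step1 a b ha hb (rr_nonneg j) (rr_lt_one j)
    have h2 := (reindex a b ha hb (rr j) _).1 h1
    exact h2.tsum_eq.symm
  have T1 := main_limit a b ha hb
  have T1' : Filter.Tendsto (fun j => ∑' k, gk a' b' (rr j) k) Filter.atTop
      (nhds (∫ θ in (0:ℝ)..1, LL 1 (2*π*a*θ) * LL 1 (2*π*b*θ))) :=
    T1.congr hseq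
  have T2 := sum_tendsto a' b' ha'pos hb'pos
  have hval : (∫ θ in (0:ℝ)..1, LL 1 (2*π*a*θ) * LL 1 (2*π*b*θ))
      = π^2 / (12*(a':ℝ)*(b':ℝ)) := tendsto_nhds_unique T1' T2
  have hLHS : (∫ θ in (0:ℝ)..1,
        Real.log ‖Complex.exp (2 * π * Complex.I * θ * a) - 1‖ *
        Real.log ‖Complex.exp (2 * π * Complex.I * θ * b) - 1‖)
      = ∫ θ in (0:ℝ)..1, LL 1 (2*π*a*θ) * LL 1 (2*π*b*θ) := by
    apply intervalIntegral.integral_congr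
    intro θ _
    have hc : ∀ c : ℕ, Real.log ‖Complex.exp (2 * π * Complex.I * θ * c) - 1‖
        = LL 1 (2*π*c*θ) := by
      intro c
      rw [LL, Complex.ofReal_one, one_mul, norm_sub_rev]
      congr 2
      push_cast
      ring
    show _ * _ = _
    rw [hc a, hc b]
  rw [hLHS, hval]
  have hge : (g:ℝ) ≠ 0 := Nat.cast_ne_zero.2 hgpos.ne'
  have ha'e : (a':ℝ) ≠ 0 := Nat.cast_ne_zero.2 ha'pos.ne'
  have hb'e : (b':ℝ) ≠ 0 := Nat.cast_ne_zero.2 hb'pos.ne'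
  have hacast : (a:ℝ) = (g:ℝ) * (a':ℝ) := by exact_mod_cast congrArg (Nat.cast : ℕ → ℝ) haeq
  have hbcast : (b:ℝ) = (g:ℝ) * (b':ℝ) := by exact_mod_cast congrArg (Nat.cast : ℕ → ℝ) hbeq
  rw [hacast, hbcast]
  field_simp
end

section
/- The multiple Mahler measure m(x+1, x−1) := ∫_0^1 log|e^{2πiθ}+1| · log|e^{2πiθ}−1| dθ equals −π²/24. -/
open Real MeasureTheory Filter Topology intervalIntegral

noncomputable def ee (θ : ℝ) : ℂ := Complex.exp (2 * π * Complex.I * θ)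
noncomputable def FF (c : ℝ) (θ : ℝ) : ℝ := Real.log ‖1 - c * ee θ‖
lemma ee_eq (θ : ℝ) : ee θ = Complex.exp (((2 * π * θ : ℝ) : ℂ) * Complex.I) := by
  unfold ee; push_cast; ring_nf
lemma ee_re (θ : ℝ) : (ee θ).re = Real.cos (2 * π * θ) := by
  rw [ee_eq, Complex.exp_ofReal_mul_I_re]
lemma ee_im (θ : ℝ) : (ee θ).im = Real.sin (2 * π * θ) := by
  rw [ee_eq, Complex.exp_ofReal_mul_I_im]
lemma ee_abs (θ : ℝ) : ‖ee θ‖ = 1 := by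
  rw [ee_eq, Complex.norm_exp_ofReal_mul_I]
lemma ee_pow (θ : ℝ) (n : ℕ) : ee θ ^ n = ee (n * θ) := by
  rw [ee, ee, ← Complex.exp_nat_mul]; push_cast; ring_nf

lemma hasSumF (c : ℝ) (hc : |c| < 1) (θ : ℝ) :
    HasSum (fun n : ℕ => -(c ^ n / n * Real.cos (2 * π * n * θ))) (FF c θ) := by
  have hz : ‖(c : ℂ) * ee θ‖ < 1 := by
    rw [norm_mul, Complex.norm_real, ee_abs, mul_one, Real.norm_eq_abs]
    exact hc
  have h := (Complex.hasSum_re (Complex.hasSum_taylorSeries_neg_log hz)).neg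
  have hre : (-(Complex.log (1 - (c : ℂ) * ee θ))).re = -FF c θ := by
    rw [Complex.neg_re, Complex.log_re]; rfl
  rw [hre, neg_neg] at h
  convert h using 2 with n
  · rfl
  rw [mul_pow, ee_pow, ← Complex.ofReal_pow]
  rw [ee_eq]
  rw [show (((c ^ n : ℝ) : ℂ) * Complex.exp (((2*π*(n*θ) : ℝ) : ℂ) * Complex.I)) / (n : ℂ)
      = ((c^n / n : ℝ) : ℂ) * Complex.exp (((2*π*(n*θ) : ℝ) : ℂ) * Complex.I) by
    push_cast; ring]
  rw [Complex.re_ofReal_mul, Complex.exp_ofReal_mul_I_re]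
  ring_nf


lemma intcos (m : ℤ) (hm : m ≠ 0) : ∫ θ in (0:ℝ)..1, Real.cos (2 * π * m * θ) = 0 := by
  have hc : (2 * π * m : ℝ) ≠ 0 := by
    have := Real.pi_ne_zero
    simp [this, hm]
  have := intervalIntegral.integral_comp_mul_left (a := (0:ℝ)) (b := 1)
    (fun x => Real.cos x) hc
  simp only [mul_zero, mul_one] at this
  rw [show (fun θ : ℝ => Real.cos (2 * π * m * θ)) = (fun θ : ℝ => Real.cos (2 * π * m * θ)) from rfl]
  calc ∫ θ in (0:ℝ)..1, Real.cos (2 * π * m * θ)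
      = (2 * π * m : ℝ)⁻¹ • ∫ x in (0:ℝ)..(2 * π * m : ℝ), Real.cos x := this
    _ = 0 := by
        rw [integral_cos, Real.sin_zero, sub_zero,
          show (2 * π * (m:ℝ)) = ((2 * m : ℤ) : ℝ) * π by push_cast; ring,
          Real.sin_int_mul_pi, smul_zero]

lemma coscos (n k : ℕ) (hk : k ≠ 0) :
    ∫ θ in (0:ℝ)..1, Real.cos (2 * π * n * θ) * Real.cos (2 * π * k * θ)
      = if n = k then 1/2 else 0 := by
  have key : ∀ θ : ℝ, Real.cos (2 * π * n * θ) * Real.cos (2 * π * k * θ)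
      = (Real.cos (2 * π * ((n : ℝ) + k) * θ) + Real.cos (2 * π * ((n : ℝ) - k) * θ)) / 2 := by
    intro θ
    have h1 := Real.cos_add (2 * π * n * θ) (2 * π * k * θ)
    have h2 := Real.cos_sub (2 * π * n * θ) (2 * π * k * θ)
    have e1 : 2 * π * n * θ + 2 * π * k * θ = 2 * π * ((n : ℝ) + k) * θ := by ring
    have e2 : 2 * π * n * θ - 2 * π * k * θ = 2 * π * ((n : ℝ) - k) * θ := by ring
    rw [e1] at h1; rw [e2] at h2
    rw [h1, h2]; ring
  simp only [key]
  have i1 : IntervalIntegrable (fun θ : ℝ => Real.cos (2 * π * ((n : ℝ) + k) * θ)) volume 0 1 :=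
    (Real.continuous_cos.comp (by continuity)).intervalIntegrable 0 1
  have i2 : IntervalIntegrable (fun θ : ℝ => Real.cos (2 * π * ((n : ℝ) - k) * θ)) volume 0 1 :=
    (Real.continuous_cos.comp (by continuity)).intervalIntegrable 0 1
  rw [show (fun θ : ℝ => (Real.cos (2 * π * ((n : ℝ) + k) * θ) + Real.cos (2 * π * ((n : ℝ) - k) * θ)) / 2)
      = (fun θ : ℝ => (2:ℝ)⁻¹ * (Real.cos (2 * π * ((n : ℝ) + k) * θ) + Real.cos (2 * π * ((n : ℝ) - k) * θ))) by
    funext θ; ring]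
  rw [intervalIntegral.integral_const_mul, intervalIntegral.integral_add i1 i2]
  have hsum : ∫ θ in (0:ℝ)..1, Real.cos (2 * π * ((n : ℝ) + k) * θ) = 0 := by
    have := intcos ((n : ℤ) + k) (by positivity)
    rw [show (((n : ℤ) + k : ℤ) : ℝ) = (n : ℝ) + k by push_cast; ring] at this
    exact this
  rw [hsum]
  by_cases h : n = k
  · subst h
    rw [show ((n : ℝ) - n) = (((0 : ℤ)) : ℝ) by push_cast; ring]
    simp only [Int.cast_zero, mul_zero, zero_mul, Real.cos_zero]
    rw [intervalIntegral.integral_const]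
    norm_num
  · have hd : ((n : ℤ) - k) ≠ 0 := by
      intro hcon; apply h; omega
    have := intcos ((n : ℤ) - k) hd
    rw [show (((n : ℤ) - k : ℤ) : ℝ) = (n : ℝ) - k by push_cast; ring] at this
    rw [this]
    simp [h]

noncomputable def DD (θ : ℝ) : ℝ := Real.log 2 - Real.log |Real.sin (π * θ)|

lemma abs_le_two (c : ℝ) (hc : |c| ≤ 1) (θ : ℝ) : ‖1 - c * ee θ‖ ≤ 2 := by
  calc ‖1 - c * ee θ‖ ≤ ‖(1:ℂ)‖ + ‖(c : ℂ) * ee θ‖ := by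
        simpa [sub_eq_add_neg] using norm_add_le (1:ℂ) (-(c * ee θ))
    _ ≤ 2 := by
        rw [norm_mul, ee_abs, Complex.norm_real, Real.norm_eq_abs, norm_one, mul_one]
        linarith

lemma normSq_eval (c : ℝ) (θ : ℝ) :
    Complex.normSq (1 - c * ee θ) = 1 - 2 * c * Real.cos (2 * π * θ) + c ^ 2 := by
  rw [Complex.normSq_apply]
  simp [Complex.sub_re, Complex.sub_im, Complex.mul_re, Complex.mul_im, Complex.ofReal_re,
    Complex.ofReal_im, ee_re, ee_im]
  have h := Real.sin_sq_add_cos_sq (2 * π * θ)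
  nlinarith [h]

lemma sin_le_abs (r : ℝ) (hr : 1/2 ≤ r) (hr' : r ≤ 1) (θ : ℝ) :
    |Real.sin (π * θ)| ≤ ‖1 - r * ee θ‖ := by
  rw [Complex.norm_def]
  rw [show |Real.sin (π * θ)| = Real.sqrt (Real.sin (π * θ) ^ 2) by
    rw [Real.sqrt_sq_eq_abs]]
  apply Real.sqrt_le_sqrt
  rw [normSq_eval]
  have hc : Real.cos (2 * π * θ) = 1 - 2 * Real.sin (π * θ) ^ 2 := by
    rw [show 2 * π * θ = 2 * (π * θ) by ring, Real.cos_two_mul']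
    have := Real.sin_sq_add_cos_sq (π * θ)
    nlinarith
  nlinarith [sq_nonneg (Real.sin (π * θ)), sq_nonneg (1 - r)]

lemma cos_le_abs (r : ℝ) (hr : 1/2 ≤ r) (hr' : r ≤ 1) (θ : ℝ) :
    |Real.cos (π * θ)| ≤ ‖1 - ((-r : ℝ) : ℂ) * ee θ‖ := by
  rw [Complex.norm_def, Complex.ofReal_neg]
  rw [show |Real.cos (π * θ)| = Real.sqrt (Real.cos (π * θ) ^ 2) by
    rw [Real.sqrt_sq_eq_abs]]
  apply Real.sqrt_le_sqrt
  rw [show (1 - -(r:ℂ) * ee θ) = 1 - ((-r : ℝ):ℂ) * ee θ by push_cast; ring, normSq_eval]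
  have hc : Real.cos (2 * π * θ) = 2 * Real.cos (π * θ) ^ 2 - 1 := by
    rw [show 2 * π * θ = 2 * (π * θ) by ring, Real.cos_two_mul]
  nlinarith [sq_nonneg (Real.cos (π * θ)), sq_nonneg (1 - r)]

lemma log_abs_le {x s : ℝ} (h1 : |s| ≤ x) (h2 : x ≤ 2) (hs0 : s ≠ 0) (hs1 : |s| ≤ 1) :
    |Real.log x| ≤ Real.log 2 - Real.log |s| := by
  have hx : 0 < x := lt_of_lt_of_le (abs_pos.mpr hs0) h1
  have hls : Real.log |s| ≤ 0 := Real.log_nonpos (abs_nonneg s) hs1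
  have h2' : Real.log x ≤ Real.log 2 := Real.log_le_log hx h2
  have h1' : Real.log |s| ≤ Real.log x := Real.log_le_log (abs_pos.mpr hs0) h1
  rw [abs_le]
  constructor
  · have : (0:ℝ) ≤ Real.log 2 := Real.log_nonneg (by norm_num)
    linarith
  · linarith [Real.log_nonneg (show (1:ℝ) ≤ 2 by norm_num)]

lemma FF_bound (r : ℝ) (hr : 1/2 ≤ r) (hr' : r ≤ 1) (θ : ℝ) (hθ : Real.sin (π * θ) ≠ 0) :
    |FF r θ| ≤ DD θ :=
  log_abs_le (sin_le_abs r hr hr' θ) (abs_le_two r (by rw [abs_of_nonneg] <;> linarith) θ)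
    hθ (Real.abs_sin_le_one _)

lemma FF_bound' (r : ℝ) (hr : 1/2 ≤ r) (hr' : r ≤ 1) (θ : ℝ) (hθ : Real.cos (π * θ) ≠ 0) :
    |FF (-r) θ| ≤ DD (θ + 1/2) := by
  have key : DD (θ + 1/2) = Real.log 2 - Real.log |Real.cos (π * θ)| := by
    unfold DD
    rw [show π * (θ + 1/2) = π * θ + π/2 by ring, Real.sin_add_pi_div_two]
  rw [key]
  exact log_abs_le (cos_le_abs r hr hr' θ)
    (abs_le_two (-r) (by rw [abs_neg, abs_of_nonneg] <;> linarith) θ) hθ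
    (Real.abs_cos_le_one _)


lemma measDD : Measurable DD := by
  unfold DD
  exact measurable_const.sub (Real.measurable_log.comp
    ((continuous_abs.comp (Real.continuous_sin.comp (continuous_const.mul continuous_id))).measurable))

lemma sq_log_le {y : ℝ} (hy : 0 < y) (hy1 : y ≤ 1) : (Real.log y) ^ 2 ≤ 16 * y ^ (-(1/2) : ℝ) := by
  have h4 : Real.log (y ^ (-(1/4) : ℝ)) = -(1/4) * Real.log y := Real.log_rpow hy _
  have hpos : 0 < y ^ (-(1/4) : ℝ) := Real.rpow_pos_of_pos hy _
  have hle : Real.log (y ^ (-(1/4) : ℝ)) ≤ y ^ (-(1/4) : ℝ) - 1 :=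
    Real.log_le_sub_one_of_pos hpos
  have hnl : 0 ≤ -Real.log y := by
    have := Real.log_nonpos hy.le hy1; linarith
  have key : -Real.log y ≤ 4 * y ^ (-(1/4) : ℝ) := by nlinarith
  have hsq : (Real.log y) ^ 2 = (-Real.log y) ^ 2 := by ring
  have h2 : (y ^ (-(1/4) : ℝ)) ^ 2 = y ^ (-(1/2) : ℝ) := by
    rw [← Real.rpow_natCast (y ^ (-(1/4) : ℝ)) 2, ← Real.rpow_mul hy.le]; norm_num
  calc (Real.log y) ^ 2 = (-Real.log y) ^ 2 := hsq
    _ ≤ (4 * y ^ (-(1/4) : ℝ)) ^ 2 := by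
        apply pow_le_pow_left₀ hnl key
    _ = 16 * y ^ (-(1/2) : ℝ) := by rw [mul_pow, h2]; norm_num

lemma DD_sq_le {θ : ℝ} (h0 : 0 < θ) (h1 : θ ≤ 1/2) : DD θ ^ 2 ≤ 16 * θ ^ (-(1/2) : ℝ) := by
  have hπ := Real.pi_pos
  have hπθ0 : 0 ≤ π * θ := by positivity
  have hπθ : π * θ ≤ π / 2 := by nlinarith
  have hsin : 2 * θ ≤ Real.sin (π * θ) := by
    have := Real.mul_le_sin hπθ0 hπθ
    have h2 : 2 / π * (π * θ) = 2 * θ := by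
      field_simp
    linarith [h2 ▸ this]
  have hsinpos : 0 < Real.sin (π * θ) := by linarith
  have habs : |Real.sin (π * θ)| = Real.sin (π * θ) := abs_of_pos hsinpos
  have hDD0 : 0 ≤ DD θ := by
    unfold DD
    have := Real.log_nonpos (abs_nonneg _) (by rw [habs]; exact Real.sin_le_one _)
    have := Real.log_nonneg (show (1:ℝ) ≤ 2 by norm_num)
    linarith
  have hDDle : DD θ ≤ -Real.log θ := by
    unfold DD
    rw [habs]
    have hl : Real.log (2 * θ) ≤ Real.log (Real.sin (π * θ)) :=
      Real.log_le_log (by linarith) hsin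
    rw [Real.log_mul two_ne_zero h0.ne'] at hl
    linarith
  calc DD θ ^ 2 ≤ (-Real.log θ) ^ 2 := pow_le_pow_left₀ hDD0 hDDle 2
    _ = (Real.log θ) ^ 2 := by ring
    _ ≤ 16 * θ ^ (-(1/2) : ℝ) := sq_log_le h0 (by linarith)

lemma intDD1 : IntervalIntegrable (fun θ => DD θ ^ 2) volume 0 (1/2) := by
  apply IntervalIntegrable.mono_fun
    ((intervalIntegrable_rpow' (by norm_num : (-1:ℝ) < -(1/2))).const_mul 16)
    ((measDD.pow_const 2).aestronglyMeasurable)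
  rw [Set.uIoc_of_le (by norm_num : (0:ℝ) ≤ 1/2)]
  filter_upwards [ae_restrict_mem measurableSet_Ioc] with θ hθ
  have hb := DD_sq_le hθ.1 hθ.2
  have h1 : 0 ≤ (16 : ℝ) * θ ^ (-(1/2) : ℝ) :=
    mul_nonneg (by norm_num) (Real.rpow_nonneg hθ.1.le _)
  rw [Real.norm_eq_abs, Real.norm_eq_abs, abs_of_nonneg (sq_nonneg _), abs_of_nonneg h1]
  exact hb

lemma DD_reflect (θ : ℝ) : DD (1 - θ) = DD θ := by
  unfold DD
  rw [show π * (1 - θ) = π - π * θ by ring, Real.sin_pi_sub]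

lemma DD_shift (θ : ℝ) : DD (θ - 1) = DD θ := by
  unfold DD
  rw [show π * (θ - 1) = π * θ - π by ring, Real.sin_sub_pi, abs_neg]

lemma intDD2 : IntervalIntegrable (fun θ => DD θ ^ 2) volume (1/2) 1 := by
  have h := (intDD1.comp_sub_left 1)
  norm_num at h
  have : (fun x => DD (1 - x) ^ 2) = fun x => DD x ^ 2 := by
    funext x; rw [DD_reflect]
  rw [this] at h
  exact h.symm

lemma intDDsq : IntervalIntegrable (fun θ => DD θ ^ 2) volume 0 1 := intDD1.trans intDD2

lemma intDD3 : IntervalIntegrable (fun θ => DD θ ^ 2) volume 1 (3/2) := by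
  have h := (intDD1.comp_sub_right 1)
  norm_num at h
  have : (fun x => DD (x - 1) ^ 2) = fun x => DD x ^ 2 := by
    funext x; rw [DD_shift]
  rw [this] at h
  exact h

lemma intDDshift : IntervalIntegrable (fun θ => DD (θ + 1/2) ^ 2) volume 0 1 := by
  have h := (intDD2.trans intDD3).comp_add_right (1/2)
  norm_num at h ⊢
  convert h using 2 <;> norm_num
lemma FF_const_bound (c : ℝ) (hc : |c| < 1) (θ : ℝ) :
    |FF c θ| ≤ Real.log 2 - Real.log (1 - |c|) := by
  have hw : ‖(c:ℂ) * ee θ‖ = |c| := by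
    rw [norm_mul, ee_abs, Complex.norm_real, Real.norm_eq_abs, mul_one]
  have h1 : 1 - |c| ≤ ‖1 - c * ee θ‖ := by
    have h2 := norm_sub_norm_le (1:ℂ) ((c:ℂ) * ee θ)
    rw [norm_one] at h2
    rw [hw] at h2
    linarith
  have hpos : (0:ℝ) < 1 - |c| := by linarith [abs_nonneg c]
  have h3 := log_abs_le (s := 1 - |c|) (by rwa [abs_of_pos hpos]) (abs_le_two c hc.le θ)
    hpos.ne' (by rw [abs_of_pos hpos]; linarith [abs_nonneg c])
  rwa [abs_of_pos hpos] at h3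

lemma term_bound (c : ℝ) (n : ℕ) : |c ^ n / (n:ℝ)| ≤ |c| ^ n := by
  rcases Nat.eq_zero_or_pos n with h | h
  · subst h; simp
  · rw [abs_div, abs_pow, Nat.abs_cast]
    rcases Nat.one_le_iff_ne_zero.mpr h.ne' with h1
    calc |c| ^ n / (n:ℝ) ≤ |c| ^ n / 1 := by
          apply div_le_div_of_nonneg_left (pow_nonneg (abs_nonneg c) n) one_pos
          exact_mod_cast h1
      _ = |c| ^ n := div_one _

lemma contAux (c : ℝ) : Continuous fun θ => ‖1 - c * ee θ‖ := by
  apply continuous_norm.comp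
  unfold ee
  fun_prop

lemma measFF (c : ℝ) : Measurable (FF c) :=
  Real.measurable_log.comp (contAux c).measurable

lemma step1_s6 (c : ℝ) (hc : |c| < 1) (k : ℕ) (hk : k ≠ 0) :
    ∫ θ in (0:ℝ)..1, FF c θ * Real.cos (2 * π * k * θ) = -(c ^ k) / (2 * k) := by
  have hterm : ∀ n : ℕ, (∫ θ in (0:ℝ)..1, (-(c ^ n / n * Real.cos (2 * π * n * θ))) * Real.cos (2 * π * k * θ))
      = if n = k then -(c ^ k) / (2 * k) else 0 := by
    intro n
    have hptw : ∀ θ : ℝ, (-(c ^ n / n * Real.cos (2 * π * n * θ))) * Real.cos (2 * π * k * θ)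
        = (-(c ^ n / n)) * (Real.cos (2 * π * n * θ) * Real.cos (2 * π * k * θ)) := by
      intro θ; ring
    simp only [hptw]
    rw [intervalIntegral.integral_const_mul, coscos n k hk]
    by_cases h : n = k
    · subst h; simp only [if_pos rfl]
      field_simp
      have hn0 : (n:ℝ) ≠ 0 := Nat.cast_ne_zero.mpr hk
      simp only [if_true]
      field_simp
    · simp [h]
  have hs : HasSum (fun n : ℕ => ∫ θ in (0:ℝ)..1,
        (-(c ^ n / n * Real.cos (2 * π * n * θ))) * Real.cos (2 * π * k * θ))
      (∫ θ in (0:ℝ)..1, FF c θ * Real.cos (2 * π * k * θ)) := by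
    apply intervalIntegral.hasSum_integral_of_dominated_convergence (bound := fun n _ => |c| ^ n)
    · intro n
      exact (Continuous.aestronglyMeasurable (by fun_prop))
    · intro n
      filter_upwards with θ hθ
      have h1 : |(-(c ^ n / n * Real.cos (2 * π * n * θ))) * Real.cos (2 * π * k * θ)|
          = |c ^ n / n| * |Real.cos (2 * π * n * θ)| * |Real.cos (2 * π * k * θ)| := by
        rw [abs_mul, abs_neg, abs_mul]
      rw [Real.norm_eq_abs, h1]
      calc |c ^ n / (n:ℝ)| * |Real.cos (2 * π * n * θ)| * |Real.cos (2 * π * k * θ)|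
          ≤ |c ^ n / (n:ℝ)| * 1 * 1 := by
            apply mul_le_mul (mul_le_mul le_rfl (Real.abs_cos_le_one _) (abs_nonneg _) (abs_nonneg _))
              (Real.abs_cos_le_one _) (abs_nonneg _)
            positivity
        _ = |c ^ n / (n:ℝ)| := by ring
        _ ≤ |c| ^ n := term_bound c n
    · filter_upwards with θ hθ
      exact summable_geometric_of_lt_one (abs_nonneg c) hc
    · exact intervalIntegrable_const
    · filter_upwards with θ hθ
      exact (hasSumF c hc θ).mul_right _
  simp only [hterm] at hs
  exact (hs.unique (hasSum_ite_eq k _))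
lemma step2 (r : ℝ) (hr : |r| < 1) :
    ∫ θ in (0:ℝ)..1, FF (-r) θ * FF r θ
      = ∑' k : ℕ, (-(r ^ 2)) ^ k / (2 * (k:ℝ) ^ 2) := by
  have hr' : |(-r)| < 1 := by rwa [abs_neg]
  set C : ℝ := Real.log 2 - Real.log (1 - |r|) with hC
  have hC0 : 0 ≤ C := by
    have h1 : Real.log (1 - |r|) ≤ 0 :=
      Real.log_nonpos (by linarith [abs_nonneg r]) (by linarith [abs_nonneg r])
    have h2 : (0:ℝ) ≤ Real.log 2 := Real.log_nonneg (by norm_num)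
    rw [hC]; linarith
  have hterm : ∀ k : ℕ, (∫ θ in (0:ℝ)..1,
        (-((-r) ^ k / k * Real.cos (2 * π * k * θ))) * FF r θ)
      = (-(r ^ 2)) ^ k / (2 * (k:ℝ) ^ 2) := by
    intro k
    rcases Nat.eq_zero_or_pos k with h | h
    · subst h
      simp
    · have hptw : ∀ θ : ℝ, (-((-r) ^ k / k * Real.cos (2 * π * k * θ))) * FF r θ
          = (-((-r) ^ k / k)) * (FF r θ * Real.cos (2 * π * k * θ)) := by
        intro θ; ring
      simp only [hptw]
      rw [intervalIntegral.integral_const_mul, step1_s6 r hr k h.ne']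
      have hk0 : (k:ℝ) ≠ 0 := Nat.cast_ne_zero.mpr h.ne'
      rw [neg_pow, neg_pow]
      field_simp
      ring
  have hs : HasSum (fun k : ℕ => ∫ θ in (0:ℝ)..1,
        (-((-r) ^ k / k * Real.cos (2 * π * k * θ))) * FF r θ)
      (∫ θ in (0:ℝ)..1, FF (-r) θ * FF r θ) := by
    apply intervalIntegral.hasSum_integral_of_dominated_convergence
      (bound := fun k _ => |r| ^ k * C)
    · intro k
      exact (((by fun_prop : Continuous fun θ : ℝ =>
        (-((-r) ^ k / k * Real.cos (2 * π * k * θ)))).measurable.mul (measFF r)).aestronglyMeasurable)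
    · intro k
      filter_upwards with θ hθ
      rw [Real.norm_eq_abs, abs_mul, abs_neg, abs_mul]
      have h1 : |(-r) ^ k / (k:ℝ)| * |Real.cos (2 * π * k * θ)| ≤ |r| ^ k := by
        calc |(-r) ^ k / (k:ℝ)| * |Real.cos (2 * π * k * θ)|
            ≤ |(-r) ^ k / (k:ℝ)| * 1 := by
              apply mul_le_mul le_rfl (Real.abs_cos_le_one _) (abs_nonneg _) (abs_nonneg _)
          _ = |(-r) ^ k / (k:ℝ)| := mul_one _
          _ ≤ |(-r)| ^ k := term_bound (-r) k
          _ = |r| ^ k := by rw [abs_neg]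
      exact mul_le_mul h1 (FF_const_bound r hr θ) (abs_nonneg _)
        (pow_nonneg (abs_nonneg r) k)
    · filter_upwards with θ hθ
      exact (summable_geometric_of_lt_one (abs_nonneg r) hr).mul_right C
    · exact intervalIntegrable_const
    · filter_upwards with θ hθ
      exact (hasSumF (-r) hr' θ).mul_right _
  simp only [hterm] at hs
  exact hs.tsum_eq.symm

lemma altsum : HasSum (fun k : ℕ => ((-1):ℝ) ^ k / (2 * (k:ℝ) ^ 2)) (-π ^ 2 / 24) := by
  have hv : HasSum (fun n : ℕ => 1 / (n:ℝ) ^ 2) (π ^ 2 / 6) := hasSum_zeta_two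
  have h2m : HasSum (fun m : ℕ => 1 / (((2 * m : ℕ)):ℝ) ^ 2) (π ^ 2 / 24) := by
    have := hv.div_const 4
    have heq : (fun m : ℕ => 1 / (((2 * m : ℕ)):ℝ) ^ 2) = fun m : ℕ => (1 / (m:ℝ) ^ 2) / 4 := by
      funext m
      rcases eq_or_ne m 0 with h | h
      · subst h; norm_num
      · have : (m:ℝ) ≠ 0 := Nat.cast_ne_zero.mpr h
        push_cast
        field_simp
        ring
    rw [heq]
    convert this using 1
    · rfl
    ring
  set u : ℕ → ℝ := fun k => if Even k then 1 / (k:ℝ) ^ 2 else 0 with hu_def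
  have hinj : Function.Injective (fun m : ℕ => 2 * m) := fun a b hab => by dsimp at hab; omega
  have hu : HasSum u (π ^ 2 / 24) := by
    rw [← Function.Injective.hasSum_iff hinj ?_]
    · convert h2m using 1
      funext m
      simp only [Function.comp_apply, hu_def]
      rw [if_pos (even_two_mul m)]
    · intro x hx
      simp only [hu_def]
      rw [if_neg]
      intro hev
      obtain ⟨t, ht⟩ := hev
      exact hx ⟨t, by dsimp; omega⟩
  have halt : HasSum (fun k : ℕ => ((-1):ℝ) ^ k / (k:ℝ) ^ 2) (-π ^ 2 / 12) := by
    have h := (hu.mul_left 2).sub hv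
    have heq : (fun k : ℕ => 2 * u k - 1 / (k:ℝ) ^ 2)
        = fun k : ℕ => ((-1):ℝ) ^ k / (k:ℝ) ^ 2 := by
      funext k
      rcases Nat.even_or_odd k with he | ho
      · rw [hu_def]; simp only [if_pos he, he.neg_one_pow]; ring
      · rw [hu_def]; simp only [if_neg (Nat.not_even_iff_odd.mpr ho), ho.neg_one_pow]; ring
    rw [heq] at h
    convert h using 1
    · rfl
    ring
  have := halt.div_const 2
  have heq : (fun k : ℕ => ((-1):ℝ) ^ k / (k:ℝ) ^ 2 / 2)
      = fun k : ℕ => ((-1):ℝ) ^ k / (2 * (k:ℝ) ^ 2) := by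
    funext k; rw [div_div, mul_comm]
  rw [heq] at this
  convert this using 1
  · rfl
  ring
lemma SS_tendsto :
    Tendsto (fun r : ℝ => ∑' k : ℕ, (-(r ^ 2)) ^ k / (2 * (k:ℝ) ^ 2)) (𝓝[<] (1:ℝ))
      (𝓝 (-π ^ 2 / 24)) := by
  rw [← altsum.tsum_eq]
  apply tendsto_tsum_of_dominated_convergence (bound := fun k : ℕ => 1 / (2 * (k:ℝ) ^ 2))
  · have hs : Summable (fun k : ℕ => 1 / (k:ℝ) ^ 2) := by
      have := (summable_one_div_nat_pow (p := 2)).mpr (by norm_num)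
      exact_mod_cast this
    have := hs.div_const 2
    apply Summable.congr this
    intro k
    rw [div_div, mul_comm]
  · intro k
    have hcont : Continuous (fun r : ℝ => (-(r ^ 2)) ^ k / (2 * (k:ℝ) ^ 2)) := by fun_prop
    have := (hcont.tendsto 1).mono_left (nhdsWithin_le_nhds (s := Set.Iio (1:ℝ)))
    simpa using this
  · filter_upwards [Ico_mem_nhdsLT_of_mem (Set.mem_Ioc.mpr ⟨by norm_num, le_rfl⟩ :
      (1:ℝ) ∈ Set.Ioc (1/2) 1)] with r hr k
    rw [Real.norm_eq_abs, abs_div, abs_pow, abs_neg, abs_pow]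
    rcases Nat.eq_zero_or_pos k with h | h
    · subst h; simp
    · have h2 : |2 * (k:ℝ) ^ 2| = 2 * (k:ℝ) ^ 2 := abs_of_pos (by positivity)
      rw [h2]
      have hr0 : (0:ℝ) ≤ r := le_trans (by norm_num) hr.1
      have h3 : (|r| ^ 2) ^ k ≤ 1 :=
        pow_le_one₀ (by positivity) (by rw [abs_of_nonneg hr0]; nlinarith [hr.2])
      have h4 : (0:ℝ) < 2 * (k:ℝ) ^ 2 := by positivity
      calc (|r| ^ 2) ^ k / (2 * (k:ℝ) ^ 2) ≤ 1 / (2 * (k:ℝ) ^ 2) := by gcongr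
        _ = 1 / (2 * (k:ℝ) ^ 2) := rfl

lemma good_ae : ∀ᵐ θ : ℝ, Real.sin (π * θ) ≠ 0 ∧ Real.cos (π * θ) ≠ 0 := by
  have hc1 : Set.Countable {θ : ℝ | Real.sin (π * θ) = 0} := by
    apply Set.Countable.mono _ (Set.countable_range (fun n : ℤ => (n:ℝ)))
    intro θ hθ
    obtain ⟨n, hn⟩ := Real.sin_eq_zero_iff.mp hθ
    refine ⟨n, mul_left_cancel₀ Real.pi_ne_zero ?_⟩
    linarith [hn]
  have hc2 : Set.Countable {θ : ℝ | Real.cos (π * θ) = 0} := by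
    apply Set.Countable.mono _ (Set.countable_range (fun n : ℤ => (n:ℝ) + 1/2))
    intro θ hθ
    obtain ⟨n, hn⟩ := Real.cos_eq_zero_iff.mp hθ
    refine ⟨n, ?_⟩
    have hπ := Real.pi_pos
    have h2 : π * θ * 2 = (2 * (n:ℝ) + 1) * π := by
      rw [hn]; field_simp
    have h3 : π * (θ * 2) = π * (2 * (n:ℝ) + 1) := by linarith
    have h4 := mul_left_cancel₀ Real.pi_ne_zero h3
    linarith
  have hz : volume ({θ : ℝ | Real.sin (π * θ) = 0} ∪ {θ : ℝ | Real.cos (π * θ) = 0}) = 0 :=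
    Set.Countable.measure_zero (hc1.union hc2) _
  have := measure_eq_zero_iff_ae_notMem.mp hz
  filter_upwards [this] with θ hθ
  simp only [Set.mem_union, Set.mem_setOf_eq, not_or] at hθ
  exact hθ
lemma main_tendsto_lhs :
    Tendsto (fun r : ℝ => ∫ θ in (0:ℝ)..1, FF (-r) θ * FF r θ) (𝓝[<] (1:ℝ))
      (𝓝 (∫ θ in (0:ℝ)..1, FF (-1) θ * FF 1 θ)) := by
  apply intervalIntegral.tendsto_integral_filter_of_dominated_convergence
    (bound := fun θ => (DD θ ^ 2 + DD (θ + 1/2) ^ 2) / 2)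
  · filter_upwards with r
    exact ((measFF (-r)).mul (measFF r)).aestronglyMeasurable
  · filter_upwards [Ico_mem_nhdsLT_of_mem (Set.mem_Ioc.mpr ⟨by norm_num, le_rfl⟩ :
      (1:ℝ) ∈ Set.Ioc (1/2) 1)] with r hr
    filter_upwards [good_ae] with θ hθ _
    have h1 := FF_bound' r hr.1 hr.2.le θ hθ.2
    have h2 := FF_bound r hr.1 hr.2.le θ hθ.1
    rw [Real.norm_eq_abs, abs_mul]
    have hDD1 : 0 ≤ DD (θ + 1/2) := le_trans (abs_nonneg _) h1
    have hDD2 : 0 ≤ DD θ := le_trans (abs_nonneg _) h2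
    nlinarith [sq_nonneg (DD θ - DD (θ + 1/2)),
      mul_le_mul h1 h2 (abs_nonneg _) hDD1]
  · exact (intDDsq.add intDDshift).div_const 2
  · filter_upwards [good_ae] with θ hθ _
    have contc : ∀ c₀ : ℝ, ‖1 - c₀ * ee θ‖ ≠ 0 →
        ContinuousAt (fun c : ℝ => FF c θ) c₀ := by
      intro c₀ h
      exact ContinuousAt.comp (Real.continuousAt_log h)
        ((continuous_norm.comp
          (continuous_const.sub (Complex.continuous_ofReal.mul continuous_const))).continuousAt)
    have hsin : ‖1 - (1:ℝ) * ee θ‖ ≠ 0 := by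
      have hle := sin_le_abs 1 (by norm_num) le_rfl θ
      have habs : 0 < |Real.sin (π * θ)| := abs_pos.mpr hθ.1
      exact (lt_of_lt_of_le habs hle).ne'
    have hcos : ‖1 - ((-1:ℝ)) * ee θ‖ ≠ 0 := by
      have hle := cos_le_abs 1 (by norm_num) le_rfl θ
      have habs : 0 < |Real.cos (π * θ)| := abs_pos.mpr hθ.2
      exact (lt_of_lt_of_le habs hle).ne'
    have t1 : Tendsto (fun r : ℝ => FF r θ) (𝓝[<] (1:ℝ)) (𝓝 (FF 1 θ)) :=
      ((contc 1 hsin).tendsto).mono_left nhdsWithin_le_nhds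
    have t2 : Tendsto (fun r : ℝ => FF (-r) θ) (𝓝[<] (1:ℝ)) (𝓝 (FF (-1) θ)) := by
      have hneg : Tendsto (fun r : ℝ => -r) (𝓝 (1:ℝ)) (𝓝 (-1:ℝ)) := by
        simpa using (continuous_neg.tendsto (1:ℝ))
      exact (((contc (-1) hcos).tendsto).comp hneg).mono_left nhdsWithin_le_nhds
    exact t2.mul t1

open Real in
theorem mahler_xp1_xm1 :
    ∫ θ in (0:ℝ)..1,
        Real.log ‖Complex.exp (2 * π * Complex.I * θ) + 1‖ *
        Real.log ‖Complex.exp (2 * π * Complex.I * θ) - 1‖ = -π^2 / 24 := by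
  have key : ∀ θ : ℝ,
      Real.log ‖Complex.exp (2 * π * Complex.I * θ) + 1‖ *
        Real.log ‖Complex.exp (2 * π * Complex.I * θ) - 1‖
      = FF (-1) θ * FF 1 θ := by
    intro θ
    unfold FF
    rw [show (1:ℂ) - ((-1:ℝ):ℂ) * ee θ = ee θ + 1 by push_cast; ring]
    rw [show (1:ℂ) - ((1:ℝ):ℂ) * ee θ = -(ee θ - 1) by push_cast; ring]
    rw [norm_neg]
    rfl
  have h2 : Tendsto (fun r : ℝ => ∫ θ in (0:ℝ)..1, FF (-r) θ * FF r θ) (𝓝[<] (1:ℝ))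
      (𝓝 (-π ^ 2 / 24)) := by
    apply SS_tendsto.congr'
    filter_upwards [Ico_mem_nhdsLT_of_mem (Set.mem_Ioc.mpr ⟨by norm_num, le_rfl⟩ :
      (1:ℝ) ∈ Set.Ioc (1/2) 1)] with r hr
    have habs : |r| < 1 := by
      rw [abs_of_nonneg (by linarith [hr.1] : (0:ℝ) ≤ r)]
      exact hr.2
    exact (step2 r habs).symm
  have h1 := main_tendsto_lhs
  have hval := tendsto_nhds_unique h1 h2
  simp only [key]
  exact hval
end

section
/- Let τ ∈ [0,1) and g(y) = Σ_{n=1}^∞ yⁿ cos(2πnτ)/n². Then the minimum of g on the interval [0,1] is attained at y = 0 or at y = 1. -/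
open Real in
private noncomputable def Gaux (θ : ℝ) (y : ℝ) : ℝ :=
  ∑' n : ℕ, y^(n+1) * Real.cos (((n:ℝ)+1) * θ) / ((n:ℝ)+1)^2

private lemma summable_inv_sq : Summable (fun n : ℕ => 1 / ((n:ℝ)+1)^2) := by
  have h : Summable (fun n : ℕ => 1 / (n:ℝ)^2) :=
    Real.summable_one_div_nat_pow.mpr (by norm_num)
  have := (summable_nat_add_iff 1).mpr h
  refine this.congr fun n => ?_
  push_cast
  ring_nf

private lemma Gaux_contOn (θ : ℝ) : ContinuousOn (Gaux θ) (Set.Icc (-1:ℝ) 1) := by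
  apply continuousOn_tsum (u := fun n : ℕ => 1 / ((n:ℝ)+1)^2)
  · intro i
    exact (Continuous.continuousOn (by continuity))
  · exact summable_inv_sq
  · intro n x hx
    have hx1 : |x| ≤ 1 := abs_le.mpr ⟨hx.1, hx.2⟩
    have hn : (0:ℝ) < ((n:ℝ)+1)^2 := by positivity
    rw [Real.norm_eq_abs, abs_div, abs_mul, abs_pow, abs_of_pos hn]
    apply div_le_div_of_nonneg_right ?_ hn.le |>.trans_eq rfl
    calc |x|^(n+1) * |Real.cos (((n:ℝ)+1) * θ)| ≤ 1 * 1 :=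
          mul_le_mul (pow_le_one₀ (abs_nonneg x) hx1) (Real.abs_cos_le_one _)
            (abs_nonneg _) zero_le_one
      _ = 1 := one_mul 1

private lemma Gaux_hasDerivAt (θ : ℝ) {x : ℝ} (hx : x ∈ Set.Ioo (-1:ℝ) 1) :
    HasDerivAt (Gaux θ) (∑' n : ℕ, x^n * Real.cos (((n:ℝ)+1) * θ) / ((n:ℝ)+1)) x := by
  set r : ℝ := (|x| + 1) / 2 with hr
  have hxr : |x| < r := by
    have := abs_lt.mpr ⟨hx.1, hx.2⟩
    rw [hr]; linarith
  have hr0 : 0 ≤ r := by have := abs_nonneg x; rw [hr]; linarith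
  have hr1 : r < 1 := by
    have := abs_lt.mpr ⟨hx.1, hx.2⟩
    rw [hr]; linarith
  apply hasDerivAt_tsum_of_isPreconnected
    (u := fun n : ℕ => r ^ n)
    (g := fun n y => y^(n+1) * Real.cos (((n:ℝ)+1) * θ) / ((n:ℝ)+1)^2)
    (g' := fun n y => y^n * Real.cos (((n:ℝ)+1) * θ) / ((n:ℝ)+1))
    (summable_geometric_of_lt_one hr0 hr1) (isOpen_Ioo (a := -r) (b := r))
    ((convex_Ioo _ _).isPreconnected) ?_ ?_ (y₀ := 0) ?_ ?_ ?_
  · intro n y _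
    have h1 : HasDerivAt (fun y : ℝ => y^(n+1)) (((n:ℝ)+1) * y^n) y := by
      simpa using hasDerivAt_pow (n+1) y
    have h2 := (h1.mul_const (Real.cos (((n:ℝ)+1) * θ) / ((n:ℝ)+1)^2))
    have hne : ((n:ℝ)+1) ≠ 0 := by positivity
    exact (show HasDerivAt (fun y => y^(n+1) * Real.cos (((n:ℝ)+1) * θ) / ((n:ℝ)+1)^2)
        (y^n * Real.cos (((n:ℝ)+1) * θ) / ((n:ℝ)+1)) y by
      rw [show (fun y : ℝ => y^(n+1) * Real.cos (((n:ℝ)+1) * θ) / ((n:ℝ)+1)^2)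
          = fun y => y^(n+1) * (Real.cos (((n:ℝ)+1) * θ) / ((n:ℝ)+1)^2) by funext z; ring]
      refine h2.congr_deriv ?_
      field_simp)
  · intro n y hy
    have hy1 : |y| ≤ r := le_of_lt (abs_lt.mpr ⟨hy.1, hy.2⟩)
    have hn : (0:ℝ) < ((n:ℝ)+1) := by positivity
    rw [Real.norm_eq_abs, abs_div, abs_mul, abs_pow, abs_of_pos hn]
    calc |y|^n * |Real.cos (((n:ℝ)+1) * θ)| / ((n:ℝ)+1)
        ≤ r^n * 1 / 1 := by
          apply div_le_div₀ (by positivity)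
            (mul_le_mul (pow_le_pow_left₀ (abs_nonneg y) hy1 n) (Real.abs_cos_le_one _)
              (abs_nonneg _) (by positivity)) one_pos (by linarith)
      _ = r^n := by ring
  · have : (0:ℝ) < r := by have := abs_nonneg x; rw [hr]; linarith
    exact Set.mem_Ioo.mpr ⟨by linarith, this⟩
  · have : (fun n : ℕ => (0:ℝ)^(n+1) * Real.cos (((n:ℝ)+1) * θ) / ((n:ℝ)+1)^2)
        = fun _ => (0:ℝ) := by funext n; simp
    rw [this]; exact summable_zero
  · exact Set.mem_Ioo.mpr (abs_lt.mp hxr)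

open Complex in
private lemma hasSum_deriv_term (θ : ℝ) {x : ℝ} (hx0 : 0 < x) (hx1 : x < 1) :
    HasSum (fun n : ℕ => x^n * Real.cos (((n:ℝ)+1) * θ) / ((n:ℝ)+1))
      (-Real.log (1 - 2*x*Real.cos θ + x^2) / (2*x)) := by
  set z : ℂ := (x:ℂ) * Complex.exp ((θ:ℂ) * I) with hz
  have hznorm : ‖z‖ < 1 := by
    rw [hz]
    simp only [norm_mul, Complex.norm_real,
      Complex.norm_exp_ofReal_mul_I, mul_one]
    rwa [Real.norm_eq_abs, abs_of_pos hx0]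
  have h1 := Complex.hasSum_taylorSeries_neg_log hznorm
  have h2 : HasSum (fun n : ℕ => z^(n+1) / (((n:ℕ)+1 : ℕ):ℂ)) (-Complex.log (1 - z)) := by
    refine (hasSum_nat_add_iff (f := fun n : ℕ => z^n / (n:ℂ)) 1).mpr ?_
    simpa using h1
  -- rewrite each term as a real multiple of exp((n+1)θ i)
  have hterm : ∀ n : ℕ, (z^(n+1) / (((n:ℕ)+1 : ℕ):ℂ)).re
      = x^(n+1) * Real.cos (((n:ℝ)+1) * θ) / ((n:ℝ)+1) := by
    intro n
    have hzpow : z^(n+1) = ((x^(n+1) : ℝ) : ℂ) * Complex.exp ((((n:ℝ)+1) * θ : ℝ) * I) := by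
      rw [hz, mul_pow, ← Complex.exp_nat_mul]
      push_cast
      ring_nf
    have hne : (((n:ℕ)+1 : ℕ):ℂ) = ((((n:ℝ)+1) : ℝ) : ℂ) := by push_cast; ring
    rw [hzpow, hne, mul_div_assoc, Complex.re_ofReal_mul, Complex.div_ofReal_re,
      Complex.exp_ofReal_mul_I_re, mul_div_assoc]
  have h3 := Complex.hasSum_re h2
  simp only [hterm] at h3
  -- value of (-log(1-z)).re
  have hnormSq : Complex.normSq (1 - z) = 1 - 2*x*Real.cos θ + x^2 := by
    rw [Complex.normSq_apply, hz]
    simp only [Complex.sub_re, Complex.sub_im, Complex.one_re, Complex.one_im,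
      Complex.re_ofReal_mul, Complex.im_ofReal_mul,
      Complex.exp_ofReal_mul_I_re, Complex.exp_ofReal_mul_I_im]
    have := Real.sin_sq_add_cos_sq θ
    nlinarith [this]
  have hre : (-Complex.log (1 - z)).re = -(Real.log (1 - 2*x*Real.cos θ + x^2) / 2) := by
    rw [Complex.neg_re, Complex.log_re, Complex.norm_def, hnormSq, Real.log_sqrt]
    nlinarith [Real.neg_one_le_cos θ, Real.cos_le_one θ, sq_nonneg (1-x), sq_nonneg (1+x)]
  rw [hre] at h3
  have h4 := h3.mul_left x⁻¹
  have : x⁻¹ * -(Real.log (1 - 2*x*Real.cos θ + x^2) / 2)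
      = -Real.log (1 - 2*x*Real.cos θ + x^2) / (2*x) := by
    ring
  rw [this] at h4
  refine h4.congr_fun fun n => ?_
  rw [pow_succ]
  field_simp

open Real in
theorem g_min_at_endpoints (τ : ℝ) (hτ0 : 0 ≤ τ) (hτ1 : τ < 1) :
    ∀ y ∈ Set.Icc (0:ℝ) 1,
      (∑' n : ℕ, y^(n+1) * Real.cos (2 * π * (n+1) * τ) / ((n:ℝ)+1)^2) ≥
      min (∑' n : ℕ, (0:ℝ)^(n+1) * Real.cos (2 * π * (n+1) * τ) / ((n:ℝ)+1)^2)
          (∑' n : ℕ, (1:ℝ)^(n+1) * Real.cos (2 * π * (n+1) * τ) / ((n:ℝ)+1)^2) := by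
  intro y hy
  set θ := 2 * π * τ with hθ
  have hGeq : ∀ w : ℝ,
      (∑' n : ℕ, w^(n+1) * Real.cos (2 * π * (n+1) * τ) / ((n:ℝ)+1)^2) = Gaux θ w := by
    intro w
    unfold Gaux
    refine tsum_congr fun n => ?_
    congr 2
    rw [hθ]; ring
  rw [hGeq y, hGeq 0, hGeq 1]
  rcases eq_or_lt_of_le hy.1 with h0 | h0
  · rw [← h0]; exact min_le_left _ _
  rcases eq_or_lt_of_le hy.2 with h1 | h1
  · rw [h1]; exact min_le_right _ _
  -- now 0 < y < 1
  rcases le_or_gt y (2 * Real.cos θ) with hc | hc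
  · -- Gaux is monotone on [0, y]
    have mono : MonotoneOn (Gaux θ) (Set.Icc 0 y) := by
      apply monotoneOn_of_hasDerivWithinAt_nonneg (convex_Icc 0 y)
        ((Gaux_contOn θ).mono ?_)
        (f' := fun x => ∑' n : ℕ, x^n * Real.cos (((n:ℝ)+1) * θ) / ((n:ℝ)+1))
      · intro x hx
        rw [interior_Icc] at hx
        exact (Gaux_hasDerivAt θ ⟨by linarith [hx.1], hx.2.trans h1⟩).hasDerivWithinAt
      · intro x hx
        rw [interior_Icc] at hx
        have hx0 : 0 < x := hx.1
        have hx1 : x < 1 := hx.2.trans h1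
        rw [(hasSum_deriv_term θ hx0 hx1).tsum_eq]
        apply div_nonneg _ (by linarith : (0:ℝ) ≤ 2*x)
        rw [neg_nonneg]
        apply Real.log_nonpos
        · nlinarith [sq_nonneg (1 - x), Real.cos_le_one θ]
        · nlinarith [hx.2, hc, hx0]
      · intro u hu
        exact ⟨by linarith [hu.1], le_trans hu.2 h1.le⟩
    exact le_trans (min_le_left _ _) (mono ⟨le_refl 0, h0.le⟩ ⟨h0.le, le_refl y⟩ h0.le)
  · -- Gaux is antitone on [y, 1]
    have anti : AntitoneOn (Gaux θ) (Set.Icc y 1) := by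
      apply antitoneOn_of_hasDerivWithinAt_nonpos (convex_Icc y 1)
        ((Gaux_contOn θ).mono ?_)
        (f' := fun x => ∑' n : ℕ, x^n * Real.cos (((n:ℝ)+1) * θ) / ((n:ℝ)+1))
      · intro x hx
        rw [interior_Icc] at hx
        exact (Gaux_hasDerivAt θ ⟨by linarith [hx.1], hx.2⟩).hasDerivWithinAt
      · intro x hx
        rw [interior_Icc] at hx
        have hx0 : 0 < x := h0.trans hx.1
        have hx1 : x < 1 := hx.2
        rw [(hasSum_deriv_term θ hx0 hx1).tsum_eq]
        apply div_nonpos_of_nonpos_of_nonneg _ (by linarith : (0:ℝ) ≤ 2*x)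
        rw [neg_nonpos]
        apply Real.log_nonneg
        nlinarith [hx.1, hc, hx0]
      · intro u hu
        exact ⟨by linarith [hu.1], hu.2⟩
    exact le_trans (min_le_right _ _) (anti ⟨le_refl y, h1.le⟩ ⟨h1.le, le_refl 1⟩ h1.le)
end
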